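/- Every word c has a unique factorization c = u₁^{n₁} u₂^{n₂} ⋯ u_k^{n_k}, where u₁ < u₂ < ⋯ < u_k are standard (Lyndon) words and nᵢ ≥ 1 (Lyndon's theorem). -/

import Mathlib

open List


/-- Word order: `u < v` iff `v` is a proper prefix of `u`, or at the first
differing position the letter of `u` is smaller. -/
def wordLt {α : Type*} [LinearOrder α] (u v : List α) : Prop :=
  (v <+: u ∧ v ≠ u) ∨
    ∃ (w : List α) (a b : α) (u' v' : List α),
      u = w ++ a :: u' ∧ v = w ++ b :: v' ∧ a < b

/-- A nonempty word is standard (Lyndon) if `vw > wv` for every factorization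
into nonempty words. -/
def IsStandard {α : Type*} [LinearOrder α] (u : List α) : Prop :=
  u ≠ [] ∧ ∀ v w : List α, v ≠ [] → w ≠ [] → u = v ++ w → wordLt (w ++ v) (v ++ w)

namespace CFL

variable {γ : Type*} {r : γ → γ → Prop}

/-- characterization of Lex -/
theorem lex_firstdiff {a b : γ} (h : r a b) (w x y : List γ) :
    List.Lex r (w ++ a :: x) (w ++ b :: y) :=
  List.Lex.append_left r (List.Lex.rel h) w

theorem lex_prefix (l : List γ) {d : List γ} (hd : d ≠ []) :
    List.Lex r l (l ++ d) := by
  cases d with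
  | nil => exact absurd rfl hd
  | cons c t =>
    have := List.Lex.append_left r (List.Lex.nil (r := r) (a := c) (l := t)) l
    simpa using this

theorem lex_iff {u v : List γ} :
    List.Lex r u v ↔ (u <+: v ∧ u ≠ v) ∨
      ∃ w a b x y, u = w ++ a :: x ∧ v = w ++ b :: y ∧ r a b := by
  constructor
  · intro h
    induction h with
    | nil => exact Or.inl ⟨⟨_, rfl⟩, by simp⟩
    | @cons a l₁ l₂ h ih =>
      rcases ih with ⟨⟨d, hd⟩, hne⟩ | ⟨w, x, y, x', y', h1, h2, h3⟩
      · exact Or.inl ⟨⟨d, by rw [← hd]; rfl⟩, by simpa using hne⟩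
      · exact Or.inr ⟨a :: w, x, y, x', y', by rw [h1]; rfl, by rw [h2]; rfl, h3⟩
    | @rel a l₁ b l₂ h => exact Or.inr ⟨[], a, b, l₁, l₂, rfl, rfl, h⟩
  · rintro (⟨⟨d, hd⟩, hne⟩ | ⟨w, a, b, x, y, h1, h2, h3⟩)
    · subst hd
      cases d with
      | nil => simp at hne
      | cons c t => exact lex_prefix u (by simp)
    · subst h1; subst h2; exact lex_firstdiff h3 w x y

end CFL

namespace CFL
variable {γ : Type*} {r : γ → γ → Prop}

section STO
variable [IsStrictTotalOrder γ r]

theorem lex_cancel_left {u v : List γ} (w : List γ) (h : List.Lex r (w ++ u) (w ++ v)) :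
    List.Lex r u v := by
  induction w with
  | nil => exact h
  | cons a w ih => exact ih (List.lex_cons_iff.mp h)

theorem lex_trans {u v w : List γ} (h1 : List.Lex r u v) (h2 : List.Lex r v w) :
    List.Lex r u w := List.lex_trans (fun h1 h2 => _root_.trans h1 h2) h1 h2

theorem lex_asymm {u v : List γ} (h1 : List.Lex r u v) (h2 : List.Lex r v u) : False :=
  asymm h1 h2

theorem lex_irrefl {u : List γ} (h : List.Lex r u u) : False :=
  irrefl_of (List.Lex r) u h

theorem lex_total {u v : List γ} : List.Lex r u v ∨ u = v ∨ List.Lex r v u :=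
  trichotomous_of (List.Lex r) u v

end STO

/-- Lyndon word w.r.t. `r` : strictly `Lex r`-smaller than all proper rotations. -/
def Lyn (r : γ → γ → Prop) (u : List γ) : Prop :=
  u ≠ [] ∧ ∀ v w : List γ, v ≠ [] → w ≠ [] → u = v ++ w → List.Lex r (v ++ w) (w ++ v)

theorem lyn_singleton (a : γ) : Lyn r [a] := by
  refine ⟨by simp, ?_⟩
  rintro v w hv hw hvw
  exfalso
  rcases v with _ | ⟨x, v⟩; · exact hv rfl
  rcases w with _ | ⟨y, w⟩; · exact hw rfl
  have h := congrArg List.length hvw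
  simp [List.length_append] at h

section STO2
variable [IsStrictTotalOrder γ r]

/-- Key suffix lemma: a proper nonempty suffix of a Lyndon word differs from the word
at a position within the suffix, with the word's letter smaller. -/
theorem lyn_suffix_diff {u t s : List γ} (hu : Lyn r u) (huts : u = t ++ s)
    (ht : t ≠ []) (hs : s ≠ []) :
    ∃ w a b x y, u = w ++ a :: x ∧ s = w ++ b :: y ∧ r a b := by
  have hlen : s.length < u.length := by
    rw [huts]; simp
    rcases t with _ | ⟨c, t⟩; · exact absurd rfl ht
    simp
  have hrot : List.Lex r u (s ++ t) := by
    have := hu.2 t s ht hs huts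
    rwa [← huts] at this
  rcases lex_total (r := r) (u := u) (v := s) with h | h | h
  · -- Lex u s : extract first-difference (u can't be a prefix of s by length)
    rcases lex_iff.mp h with ⟨⟨d, hd⟩, _⟩ | good
    · exfalso
      have : s.length = u.length + d.length := by rw [← hd]; simp
      omega
    · exact good
  · exfalso; rw [h] at hlen; omega
  · -- Lex s u
    rcases lex_iff.mp h with ⟨⟨d, hd⟩, hne⟩ | ⟨w, a, b, x, y, h1, h2, h3⟩
    · -- s is a proper prefix of u : border, contradiction
      exfalso
      have hd' : d ≠ [] := by rintro rfl; simp at hd; exact hne hd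
      -- u = s ++ d, also u = t ++ s
      have h1 : List.Lex r u (d ++ s) := by
        rw [← hd]; exact hu.2 s d hs hd' hd.symm
      -- Lex u (s ++ t) with u = s ++ d gives Lex d t
      have h2 : List.Lex r d t := by
        apply lex_cancel_left s
        rw [hd]; exact hrot
      -- lengths of d and t are equal
      have hlen2 : d.length = t.length := by
        have e1 : u.length = s.length + d.length := by rw [← hd]; simp
        have e2 : u.length = t.length + s.length := by rw [huts]; simp
        omega
      rcases lex_iff.mp h2 with ⟨⟨e, he⟩, hne2⟩ | ⟨w, a, b, x, y, g1, g2, g3⟩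
      · have : t.length = d.length + e.length := by rw [← he]; simp
        have : e = [] := by
          rcases e with _ | ⟨c, e⟩
          · rfl
          · simp at this; omega
        subst this; simp at he; exact hne2 he
      · -- d = w++a::x, t = w++b::y, r a b ⇒ Lex (d++s) (t++s) ⇒ Lex (d++s) u
        have : List.Lex r (d ++ s) (t ++ s) := by
          rw [g1, g2]
          simpa [List.append_assoc] using lex_firstdiff g3 w (x ++ s) (y ++ s)
        rw [← huts] at this
        exact lex_asymm h1 this
    · -- s smaller at first difference: contradicts Lex u (s++t)
      exfalso
      have hc : List.Lex r (s ++ t) u := by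
        rw [h1, h2]
        simpa [List.append_assoc] using lex_firstdiff h3 w (x ++ t) y
      exact lex_asymm hrot hc

theorem lyn_suffix_lex {u t s : List γ} (hu : Lyn r u) (huts : u = t ++ s)
    (ht : t ≠ []) (hs : s ≠ []) (z z' : List γ) :
    List.Lex r (u ++ z') (s ++ z) := by
  obtain ⟨w, a, b, x, y, h1, h2, h3⟩ := lyn_suffix_diff hu huts ht hs
  rw [h1, h2]
  simpa [List.append_assoc] using lex_firstdiff h3 w (x ++ z') (y ++ z)

/-- `u < v` (with `u` nonempty, `v` Lyndon) implies `uv < v·z` for all `z`. -/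
theorem lex_append_lyn {u v : List γ} (hu : u ≠ []) (hv : Lyn r v)
    (huv : List.Lex r u v) (z : List γ) : List.Lex r (u ++ v) (v ++ z) := by
  rcases lex_iff.mp huv with ⟨⟨d, hd⟩, hne⟩ | ⟨w, a, b, x, y, h1, h2, h3⟩
  · have hd' : d ≠ [] := by rintro rfl; simp at hd; exact hne hd
    subst hd
    have h0 : List.Lex r ((u ++ d) ++ []) (d ++ z) := lyn_suffix_lex hv rfl hu hd' z []
    rw [List.append_nil] at h0
    simpa [List.append_assoc] using List.Lex.append_left r h0 u
  · rw [h1, h2]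
    simpa [List.append_assoc] using lex_firstdiff h3 w (x ++ (w ++ b :: y)) (y ++ z)

/-- Merging two Lyndon words `u < v` gives a Lyndon word. -/
theorem lyn_append {u v : List γ} (hu : Lyn r u) (hv : Lyn r v)
    (huv : List.Lex r u v) : Lyn r (u ++ v) := by
  refine ⟨by simp [hu.1], ?_⟩
  rintro p q hp hq hpq
  rcases List.append_eq_append_iff.mp hpq.symm with ⟨a', ha1, ha2⟩ | ⟨c', hc1, hc2⟩
  · -- u = p ++ a', q = a' ++ v
    rcases eq_or_ne a' [] with rfl | ha
    · -- exact split
      simp at ha1 ha2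
      rw [← ha1, ha2]
      exact lex_append_lyn hu.1 hv huv u
    · rw [← hpq, ha2]
      have := lyn_suffix_lex hu ha1 hp ha (v ++ p) v
      simpa [List.append_assoc] using this
  · -- p = u ++ c', v = c' ++ q
    rcases eq_or_ne c' [] with rfl | hc
    · simp at hc1 hc2
      rw [hc1, ← hc2]
      exact lex_append_lyn hu.1 hv huv u
    · rw [← hpq, hc1]
      have s1 : List.Lex r (u ++ v) (v ++ (u ++ c')) := lex_append_lyn hu.1 hv huv _
      have s2 : List.Lex r (v ++ (u ++ c')) (q ++ (u ++ c')) := by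
        obtain ⟨w, a, b, x, y, g1, g2, g3⟩ := lyn_suffix_diff hv hc2 hc hq
        rw [g1, g2]
        simpa [List.append_assoc] using lex_firstdiff g3 w (x ++ (u ++ c')) (y ++ (u ++ c'))
      have := lex_trans s1 s2
      simpa [List.append_assoc] using this

end STO2
end CFL

namespace CFL
variable {γ : Type*}

/-- non-strict `Lex`-order: `x ≥ y`. -/
def Ge' (r : γ → γ → Prop) (x y : List γ) : Prop := List.Lex r y x ∨ y = x

theorem Ge'.trans {r : γ → γ → Prop} [IsStrictTotalOrder γ r] :
    ∀ {x y z : List γ}, Ge' r x y → Ge' r y z → Ge' r x z := by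
  rintro x y z (h1 | rfl) (h2 | rfl)
  · exact Or.inl (lex_trans h2 h1)
  · exact Or.inl h1
  · exact Or.inl h2
  · exact Or.inr rfl

section Ins
variable (r : γ → γ → Prop)

open Classical in
noncomputable def ins (x : List γ) : List (List γ) → List (List γ)
  | [] => [x]
  | y :: l => if List.Lex r x y then ins (x ++ y) l else x :: y :: l

variable {r} [IsStrictTotalOrder γ r]

theorem ins_spec (x : List γ) (l : List (List γ)) (hx : Lyn r x)
    (hl : ∀ y ∈ l, Lyn r y) (hc : l.Chain' (Ge' r)) :
    (∀ y ∈ ins r x l, Lyn r y) ∧ (ins r x l).Chain' (Ge' r) ∧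
      ((ins r x l).flatten = x ++ l.flatten) ∧
      ∃ h t, ins r x l = h :: t ∧ (h = x ∨ List.Lex r x h) := by
  induction l generalizing x with
  | nil => exact ⟨by simpa [ins] using hx, by simp [ins, List.Chain'], by simp [ins], x, [], rfl, Or.inl rfl⟩
  | cons y l ih =>
    by_cases hxy : List.Lex r x y
    · have hylyn : Lyn r y := hl y (by simp)
      have hxylyn : Lyn r (x ++ y) := lyn_append hx hylyn hxy
      obtain ⟨H1, H2, H3, h, t, heq, hht⟩ :=
        ih (x ++ y) hxylyn (fun z hz => hl z (by simp [hz])) hc.tail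
      rw [show ins r x (y :: l) = ins r (x ++ y) l from by simp [ins, hxy]]
      refine ⟨H1, H2, by rw [H3]; simp, h, t, heq, ?_⟩
      have hxxy : List.Lex r x (x ++ y) := lex_prefix x hylyn.1
      rcases hht with rfl | hlt
      · exact Or.inr hxxy
      · exact Or.inr (lex_trans hxxy hlt)
    · rw [show ins r x (y :: l) = x :: y :: l from by simp [ins, hxy]]
      refine ⟨?_, ?_, by simp, x, y :: l, rfl, Or.inl rfl⟩
      · intro z hz
        rcases (by simpa using hz : z = x ∨ z = y ∨ z ∈ l) with rfl | rfl | hz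
        · exact hx
        · exact hl z (by simp)
        · exact hl z (by simp [hz])
      · refine List.IsChain.cons_cons ?_ hc
        rcases lex_total (r := r) (u := x) (v := y) with h | h | h
        · exact absurd h hxy
        · exact Or.inr h.symm
        · exact Or.inl h

variable (r)

noncomputable def cfl (c : List γ) : List (List γ) :=
  c.foldr (fun a acc => ins r [a] acc) []

variable {r}

theorem cfl_spec (c : List γ) :
    (∀ y ∈ cfl r c, Lyn r y) ∧ (cfl r c).Chain' (Ge' r) ∧ (cfl r c).flatten = c := by
  induction c with
  | nil => simp [cfl, List.Chain']
  | cons a c ih =>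
    obtain ⟨H1, H2, H3⟩ := ih
    have := ins_spec (r := r) [a] (cfl r c) (lyn_singleton a) H1 H2
    exact ⟨this.1, this.2.1, by rw [show cfl r (a :: c) = ins r [a] (cfl r c) from rfl, this.2.2.1, H3]; rfl⟩

end Ins
end CFL

namespace CFL
variable {γ : Type*} {r : γ → γ → Prop}

theorem chain'_ge_head [IsStrictTotalOrder γ r] {a : List γ} {l : List (List γ)}
    (h : List.Chain' (Ge' r) (a :: l)) : ∀ y ∈ l, Ge' r a y := by
  induction l generalizing a with
  | nil => simp
  | cons b l ih =>
    intro y hy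
    have hab : Ge' r a b := List.isChain_cons_cons.mp h |>.1
    rcases (by simpa using hy : y = b ∨ y ∈ l) with rfl | hy
    · exact hab
    · exact Ge'.trans hab (ih (List.isChain_cons_cons.mp h).2 y hy)

theorem prefix_flatten_decomp :
    ∀ (m : List (List γ)) (d : List γ), d ≠ [] → d <+: m.flatten →
      ∃ m₁ x m₂ p, m = m₁ ++ x :: m₂ ∧ d = m₁.flatten ++ p ∧ p <+: x ∧ p ≠ [] := by
  intro m
  induction m with
  | nil => intro d hd hpre; exact absurd (List.prefix_nil.mp (by simpa using hpre)) hd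
  | cons x m ih =>
    intro d hd hpre
    rw [List.flatten_cons] at hpre
    by_cases hlen : d.length ≤ x.length
    · have hdx : d <+: x :=
        List.prefix_of_prefix_length_le hpre (x.prefix_append m.flatten) hlen
      exact ⟨[], x, m, d, rfl, by simp, hdx, hd⟩
    · have hxd : x <+: d :=
        List.prefix_of_prefix_length_le (x.prefix_append m.flatten) hpre (le_of_not_ge hlen)
      obtain ⟨d', rfl⟩ := hxd
      have hd' : d' ≠ [] := by
        rintro rfl; simp at hlen
      have hpre' : d' <+: m.flatten := by
        obtain ⟨A, hA⟩ := hpre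
        rw [List.append_assoc] at hA
        exact ⟨A, List.append_cancel_left hA⟩
      obtain ⟨m₁, x₂, m₂, p, hm, hdp, hpx, hpne⟩ := ih d' hd' hpre'
      exact ⟨x :: m₁, x₂, m₂, p, by rw [hm]; rfl, by rw [List.flatten_cons, List.append_assoc, ← hdp],
        hpx, hpne⟩

section Uniq
variable [IsStrictTotalOrder γ r]

theorem first_factor_eq {u u' A : List γ} {l' : List (List γ)} (hu : Lyn r u) (hu' : u' ≠ [])
    (hb : ∀ y ∈ l', Ge' r u' y) (hlen : u'.length ≤ u.length)
    (heq : u ++ A = u' ++ l'.flatten) : u = u' := by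
  have hpre : u' <+: u :=
    List.prefix_of_prefix_length_le ⟨l'.flatten, heq.symm⟩ (u.prefix_append A) hlen
  by_contra hne
  obtain ⟨d, hd⟩ := hpre
  have hdne : d ≠ [] := by rintro rfl; simp at hd; exact hne hd.symm
  have hfl : d <+: l'.flatten := by
    refine ⟨A, ?_⟩
    have : u' ++ (d ++ A) = u' ++ l'.flatten := by rw [← List.append_assoc, hd]; exact heq
    exact (List.append_cancel_left this)
  obtain ⟨m₁, x, m₂, p, hm, hdp, hpx, hpne⟩ := prefix_flatten_decomp l' d hdne hfl
  have hup : List.Lex r u p := by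
    have husplit : u = (u' ++ m₁.flatten) ++ p := by
      rw [List.append_assoc, ← hdp, hd]
    have := lyn_suffix_lex hu husplit (by simp [hu']) hpne [] []
    simpa using this
  have hxp : Ge' r x p := by
    obtain ⟨e, he⟩ := hpx
    rcases eq_or_ne e [] with rfl | he'
    · simp at he; exact Or.inr he
    · refine Or.inl ?_
      rw [← he]; exact lex_prefix p he'
  have hu'x : Ge' r u' x := hb x (by rw [hm]; simp)
  have huu' : Ge' r u u' := Or.inl (by rw [← hd]; exact lex_prefix u' hdne)
  have : Ge' r u p := Ge'.trans (Ge'.trans huu' hu'x) hxp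
  rcases this with h | h
  · exact lex_asymm hup h
  · rw [h] at hup; exact lex_irrefl hup

theorem ungrouped_unique :
    ∀ l l' : List (List γ), (∀ y ∈ l, Lyn r y) → List.Chain' (Ge' r) l →
      (∀ y ∈ l', Lyn r y) → List.Chain' (Ge' r) l' → l.flatten = l'.flatten → l = l' := by
  intro l
  induction l with
  | nil =>
    intro l' _ _ h2 _ hf
    cases l' with
    | nil => rfl
    | cons x l'' =>
      exfalso
      have hx : x ≠ [] := (h2 x (by simp)).1
      have : ([] : List γ) = x ++ l''.flatten := by simpa using hf
      cases x with
      | nil => exact hx rfl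
      | cons a t => simp at this
  | cons u l ih =>
    intro l' h1 hc1 h2 hc2 hf
    cases l' with
    | nil =>
      exfalso
      have hu : u ≠ [] := (h1 u (by simp)).1
      have : u ++ l.flatten = ([] : List γ) := by simpa using hf
      cases u with
      | nil => exact hu rfl
      | cons a t => simp at this
    | cons u' l'' =>
      have hf' : u ++ l.flatten = u' ++ l''.flatten := by simpa using hf
      have huu' : u = u' := by
        rcases le_total u'.length u.length with h | h
        · exact first_factor_eq (h1 u (by simp)) (h2 u' (by simp)).1 (chain'_ge_head hc2) h hf'
        · exact (first_factor_eq (h2 u' (by simp)) (h1 u (by simp)).1 (chain'_ge_head hc1) h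
            hf'.symm).symm
      subst huu'
      have htail : l.flatten = l''.flatten := List.append_cancel_left hf'
      rw [ih l'' (fun y hy => h1 y (by simp [hy])) hc1.tail
        (fun y hy => h2 y (by simp [hy])) hc2.tail htail]

end Uniq
end CFL

namespace CFL
variable {γ : Type*} {r : γ → γ → Prop}

/-- ungrouping a run-length-encoded factorization -/
def ungroup (f : List (List γ × ℕ)) : List (List γ) :=
  f.flatMap fun q => List.replicate q.2 q.1

@[simp] theorem ungroup_nil : ungroup ([] : List (List γ × ℕ)) = [] := rfl

@[simp] theorem ungroup_cons (q : List γ × ℕ) (f : List (List γ × ℕ)) :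
    ungroup (q :: f) = List.replicate q.2 q.1 ++ ungroup f := rfl

theorem ungroup_flatten (f : List (List γ × ℕ)) :
    (ungroup f).flatten = (f.map (fun q => (List.replicate q.2 q.1).flatten)).flatten := by
  induction f with
  | nil => rfl
  | cons q f ih => simp [ih]

theorem ungroup_head (u : List γ) (n : ℕ) (hn : 1 ≤ n) (f : List (List γ × ℕ)) :
    ungroup ((u, n) :: f) = u :: (List.replicate (n - 1) u ++ ungroup f) := by
  obtain ⟨m, rfl⟩ : ∃ m, n = m + 1 := ⟨n - 1, by omega⟩
  simp [List.replicate_succ]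

theorem mem_ungroup {y : List γ} {f : List (List γ × ℕ)} (hy : y ∈ ungroup f) :
    ∃ q ∈ f, y = q.1 := by
  rw [ungroup, List.mem_flatMap] at hy
  obtain ⟨q, hq, hy⟩ := hy
  exact ⟨q, hq, (List.eq_of_mem_replicate hy)⟩

theorem ungroup_valid [IsStrictTotalOrder γ r] {f : List (List γ × ℕ)}
    (h1 : ∀ q ∈ f, Lyn r q.1 ∧ 1 ≤ q.2)
    (h2 : f.Chain' (fun q p => List.Lex r p.1 q.1)) :
    (∀ y ∈ ungroup f, Lyn r y) ∧ (ungroup f).Chain' (Ge' r) := by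
  constructor
  · intro y hy
    obtain ⟨q, hq, rfl⟩ := mem_ungroup hy
    exact (h1 q hq).1
  · induction f with
    | nil => simp [List.Chain']
    | cons q f ih =>
      simp only [List.Chain']
      rw [ungroup_cons, List.isChain_append]
      refine ⟨List.isChain_replicate_of_rel _ (Or.inr rfl), ih (fun p hp => h1 p (by simp [hp])) h2.tail, ?_⟩
      intro x hx y hy
      obtain ⟨m, hm⟩ : ∃ m, q.2 = m + 1 := ⟨q.2 - 1, by have := (h1 q (by simp)).2; omega⟩
      have hx' : x = q.1 := by
        rw [hm, List.replicate_succ', List.getLast?_concat] at hx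
        simpa using hx.symm
      cases f with
      | nil => simp [ungroup] at hy
      | cons p f' =>
        have hp2 : 1 ≤ p.2 := (h1 p (by simp)).2
        rw [ungroup_head p.1 p.2 hp2] at hy
        simp at hy
        subst hx' hy
        exact Or.inl (List.isChain_cons_cons.mp h2).1

theorem replicate_cancel {δ : Type*} {u : δ} :
    ∀ (a b : ℕ) (A B : List δ), A.head? ≠ some u → B.head? ≠ some u →
      List.replicate a u ++ A = List.replicate b u ++ B → a = b ∧ A = B := by
  intro a
  induction a with
  | zero =>
    intro b A B hA hB he
    cases b with
    | zero => simpa using he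
    | succ b =>
      exfalso
      rw [List.replicate_succ] at he
      simp at he
      exact hA (by rw [he]; rfl)
  | succ a ih =>
    intro b A B hA hB he
    cases b with
    | zero =>
      exfalso
      rw [List.replicate_succ] at he
      simp at he
      exact hB (congrArg List.head? he.symm ▸ rfl)
    | succ b =>
      rw [List.replicate_succ, List.replicate_succ] at he
      simp only [List.cons_append, List.cons.injEq] at he
      obtain ⟨h1, h2⟩ := ih b A B hA hB he.2
      exact ⟨by omega, h2⟩

theorem ungroup_inj [IsStrictTotalOrder γ r] :
    ∀ f f' : List (List γ × ℕ),
      (∀ q ∈ f, q.1 ≠ [] ∧ 1 ≤ q.2) → f.Chain' (fun q p => List.Lex r p.1 q.1) →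
      (∀ q ∈ f', q.1 ≠ [] ∧ 1 ≤ q.2) → f'.Chain' (fun q p => List.Lex r p.1 q.1) →
      ungroup f = ungroup f' → f = f' := by
  intro f
  induction f with
  | nil =>
    intro f' _ _ h2 _ he
    cases f' with
    | nil => rfl
    | cons q f'' =>
      exfalso
      rw [ungroup_head q.1 q.2 (h2 q (by simp)).2] at he
      simp [ungroup] at he
  | cons q f ihf =>
    intro f' h1 hc1 h2 hc2 he
    cases f' with
    | nil =>
      exfalso
      rw [ungroup_head q.1 q.2 (h1 q (by simp)).2] at he
      simp [ungroup] at he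
    | cons p f'' =>
      obtain ⟨u, n⟩ := q
      obtain ⟨u', n'⟩ := p
      have hn : 1 ≤ n := (h1 (u, n) (by simp)).2
      have hn' : 1 ≤ n' := (h2 (u', n') (by simp)).2
      rw [ungroup_head u n hn, ungroup_head u' n' hn'] at he
      have huu' : u = u' := by simpa using congrArg List.head? he
      subst huu'
      have htail : List.replicate (n - 1) u ++ ungroup f
          = List.replicate (n' - 1) u ++ ungroup f'' := by
        simpa using congrArg List.tail he
      have hfhead : (ungroup f).head? ≠ some u := by
        cases f with
        | nil => simp [ungroup]
        | cons p2 f2 =>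
          rw [ungroup_head p2.1 p2.2 (h1 p2 (by simp)).2]
          simp only [List.head?_cons]
          intro hval
          have hval2 : p2.1 = u := by simpa using hval
          have := (List.isChain_cons_cons.mp hc1).1
          rw [hval2] at this
          exact lex_irrefl this
      have hf''head : (ungroup f'').head? ≠ some u := by
        cases f'' with
        | nil => simp [ungroup]
        | cons p2 f2 =>
          rw [ungroup_head p2.1 p2.2 (h2 p2 (by simp)).2]
          simp only [List.head?_cons]
          intro hval
          have hval2 : p2.1 = u := by simpa using hval
          have := (List.isChain_cons_cons.mp hc2).1
          rw [hval2] at this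
          exact lex_irrefl this
      obtain ⟨hab, hAB⟩ := replicate_cancel _ _ _ _ hfhead hf''head htail
      have hnn' : n = n' := by omega
      subst hnn'
      rw [ihf f'' (fun x hx => h1 x (by simp [hx])) hc1.tail
        (fun x hx => h2 x (by simp [hx])) hc2.tail hAB]

end CFL

namespace CFL
variable {γ : Type*} {r : γ → γ → Prop}

open Classical in
noncomputable def grpCons (x : List γ) : List (List γ × ℕ) → List (List γ × ℕ)
  | [] => [(x, 1)]
  | (y, n) :: t => if x = y then (y, n + 1) :: t else (x, 1) :: (y, n) :: t

noncomputable def grp : List (List γ) → List (List γ × ℕ)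
  | [] => []
  | x :: l => grpCons x (grp l)

theorem ungroup_grpCons (x : List γ) (g : List (List γ × ℕ)) :
    ungroup (grpCons x g) = x :: ungroup g := by
  cases g with
  | nil => simp [grpCons, ungroup]
  | cons q t =>
    obtain ⟨y, n⟩ := q
    by_cases hxy : x = y
    · subst hxy
      simp [grpCons, List.replicate_succ]
    · simp [grpCons, hxy, ungroup]

theorem ungroup_grp (l : List (List γ)) : ungroup (grp l) = l := by
  induction l with
  | nil => rfl
  | cons x l ih => rw [grp, ungroup_grpCons, ih]

theorem grp_valid [IsStrictTotalOrder γ r] (l : List (List γ))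
    (hl : ∀ y ∈ l, Lyn r y) (hc : l.Chain' (Ge' r)) :
    (∀ q ∈ grp l, Lyn r q.1 ∧ 1 ≤ q.2) ∧
      (grp l).Chain' (fun q p => List.Lex r p.1 q.1) ∧
      ((grp l).map Prod.fst).head? = l.head? := by
  induction l with
  | nil => simp [grp, List.Chain']
  | cons x l ih =>
    obtain ⟨IH1, IH2, IH3⟩ := ih (fun y hy => hl y (by simp [hy])) hc.tail
    rw [grp]
    cases hg : grp l with
    | nil =>
      refine ⟨?_, ?_, ?_⟩ <;> simp [grpCons, hl x (by simp), List.Chain']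
    | cons q t =>
      obtain ⟨y, n⟩ := q
      rw [hg] at IH1 IH2 IH3
      have hyl : l.head? = some y := by simpa using IH3.symm
      have hxy : Ge' r x y := (List.isChain_cons.mp hc).1 y (by rw [hyl]; rfl)
      by_cases he : x = y
      · subst he
        rw [show grpCons x ((x, n) :: t) = (x, n + 1) :: t from by simp [grpCons]]
        refine ⟨?_, ?_, by simp⟩
        · intro q hq
          rcases (by simpa using hq : q = (x, n + 1) ∨ q ∈ t) with rfl | hq
          · exact ⟨(IH1 (x, n) (by simp)).1, by omega⟩
          · exact IH1 q (by simp [hq])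
        · simp only [List.Chain'] at IH2 ⊢
          rw [List.isChain_cons] at IH2 ⊢
          exact ⟨IH2.1, IH2.2⟩
      · rw [show grpCons x ((y, n) :: t) = (x, 1) :: (y, n) :: t from by simp [grpCons, he]]
        have hyx : List.Lex r y x := by
          rcases hxy with h | h
          · exact h
          · exact absurd h.symm he
        refine ⟨?_, ?_, by simp⟩
        · intro q hq
          rcases (by simpa using hq : q = (x, 1) ∨ q = (y, n) ∨ q ∈ t) with rfl | rfl | hq
          · exact ⟨hl x (by simp), le_refl 1⟩
          · exact IH1 (y, n) (by simp)
          · exact IH1 q (by simp [hq])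
        · exact List.isChain_cons_cons.mpr ⟨hyx, IH2⟩

theorem cfl_grouped [IsStrictTotalOrder γ r] (c : List γ) :
    ∃! f : List (List γ × ℕ),
      (∀ q ∈ f, Lyn r q.1 ∧ 1 ≤ q.2) ∧
      f.Chain' (fun q p => List.Lex r p.1 q.1) ∧
      c = (f.map (fun q => (List.replicate q.2 q.1).flatten)).flatten := by
  obtain ⟨H1, H2, H3⟩ := cfl_spec (r := r) c
  obtain ⟨G1, G2, _⟩ := grp_valid (r := r) (cfl r c) H1 H2
  have hflat : c = ((grp (cfl r c)).map (fun q => (List.replicate q.2 q.1).flatten)).flatten := by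
    rw [← ungroup_flatten, ungroup_grp, H3]
  refine ⟨grp (cfl r c), ⟨G1, G2, hflat⟩, ?_⟩
  rintro f' ⟨h1', h2', h3'⟩
  obtain ⟨V1, V2⟩ := ungroup_valid h1' h2'
  have hfl' : (ungroup f').flatten = (cfl r c).flatten := by
    rw [ungroup_flatten, ← h3', H3]
  have hug : ungroup f' = ungroup (grp (cfl r c)) := by
    rw [ungroup_grp]
    exact ungrouped_unique (ungroup f') (cfl r c) V1 V2 H1 H2 hfl'
  exact ungroup_inj f' (grp (cfl r c))
    (fun q hq => ⟨(h1' q hq).1.1, (h1' q hq).2⟩) h2'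
    (fun q hq => ⟨(G1 q hq).1.1, (G1 q hq).2⟩) G2 hug

end CFL


theorem CFL.instSTO {α : Type*} [LinearOrder α] : IsStrictTotalOrder α (fun a b : α => b < a) where
  trichotomous a b h1 h2 := le_antisymm (not_lt.mp h1) (not_lt.mp h2)
  irrefl a := lt_irrefl a
  trans a b c h1 h2 := lt_trans h2 h1

theorem wordLt_iff {α : Type*} [LinearOrder α] (u v : List α) :
    wordLt u v ↔ List.Lex (fun a b : α => b < a) v u := by
  rw [CFL.lex_iff]
  constructor
  · rintro (h | ⟨w, a, b, u', v', h1, h2, h3⟩)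
    · exact Or.inl h
    · exact Or.inr ⟨w, b, a, v', u', h2, h1, h3⟩
  · rintro (h | ⟨w, a, b, x, y, h1, h2, h3⟩)
    · exact Or.inl h
    · exact Or.inr ⟨w, b, a, y, x, h2, h1, h3⟩

theorem isStandard_iff {α : Type*} [LinearOrder α] (u : List α) :
    IsStandard u ↔ CFL.Lyn (fun a b : α => b < a) u := by
  unfold IsStandard CFL.Lyn
  refine and_congr Iff.rfl ?_
  constructor
  · intro h v w hv hw hvw
    exact (wordLt_iff _ _).mp (h v w hv hw hvw)
  · intro h v w hv hw hvw
    exact (wordLt_iff _ _).mpr (h v w hv hw hvw)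

theorem stmt_6 {α : Type*} [LinearOrder α] (c : List α) :
    ∃! f : List (List α × ℕ),
      (∀ q ∈ f, IsStandard q.1 ∧ 1 ≤ q.2) ∧
      f.Chain' (fun q r => wordLt q.1 r.1) ∧
      c = (f.map (fun q => (List.replicate q.2 q.1).flatten)).flatten := by
  haveI := CFL.instSTO (α := α)
  obtain ⟨f, ⟨h1, h2, h3⟩, huniq⟩ := CFL.cfl_grouped (r := fun a b : α => b < a) c
  refine ⟨f, ⟨?_, ?_, h3⟩, ?_⟩
  · intro q hq
    exact ⟨(isStandard_iff _).mpr (h1 q hq).1, (h1 q hq).2⟩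
  · exact h2.imp (fun {a b} h => (wordLt_iff _ _).mpr h)
  · rintro f' ⟨g1, g2, g3⟩
    refine huniq f' ⟨?_, ?_, g3⟩
    · intro q hq
      exact ⟨(isStandard_iff _).mp (g1 q hq).1, (g1 q hq).2⟩
    · exact g2.imp (fun {a b} h => (wordLt_iff _ _).mp h)
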